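/- Let n ≥ 0 and m ≥ 1, and let (p_0,…,p_m) and (q_0,…,q_m) be two (m+1)-tuples of monic real polynomials, all of degree n, such that the polynomials in each tuple have no common root in ℂ. If p_i(x)·q_j(x) = p_j(x)·q_i(x) for all indices i, j and all x ∈ ℝ (i.e. the two tuples define the same map from ℝ to ℝP^m), then p_i = q_i for every i. -/
import Mathlib


/-- Two `(m+1)`-tuples of monic real polynomials of the same degree `n`, each with no
common root in `ℂ`, which define the same map from `ℝ` to `ℝP^m` (i.e. satisfy
`p_i(x)·q_j(x) = p_j(x)·q_i(x)` for all `i, j` and all real `x`), are equal. -/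
theorem tuples_defining_same_map_eq (n m : ℕ) (hm : 1 ≤ m)
    (p q : Fin (m + 1) → Polynomial ℝ)
    (hpmonic : ∀ i, (p i).Monic) (hpdeg : ∀ i, (p i).natDegree = n)
    (hqmonic : ∀ i, (q i).Monic) (hqdeg : ∀ i, (q i).natDegree = n)
    (hp : ∀ z : ℂ, ∃ i, Polynomial.aeval z (p i) ≠ 0)
    (hq : ∀ z : ℂ, ∃ i, Polynomial.aeval z (q i) ≠ 0)
    (h : ∀ i j, ∀ x : ℝ, (p i).eval x * (q j).eval x = (p j).eval x * (q i).eval x) :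
    ∀ i, p i = q i := by
  -- pointwise equality gives polynomial identity
  have h' : ∀ i j, p i * q j = p j * q i := by
    intro i j
    apply Polynomial.funext
    intro x
    simp [Polynomial.eval_mul, h i j x]
  -- the ideal generated by the p j is ⊤
  set I : Ideal (Polynomial ℝ) := Ideal.span (Set.range p) with hI
  have hItop : I = ⊤ := by
    by_contra htop
    have hgen : I = Ideal.span {Submodule.IsPrincipal.generator I} :=
      (Submodule.IsPrincipal.span_singleton_generator I).symm
    set g := Submodule.IsPrincipal.generator I with hg
    have hdvd : ∀ j, g ∣ p j := by
      intro j
      have : p j ∈ I := Ideal.subset_span ⟨j, rfl⟩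
      rw [hgen, Ideal.mem_span_singleton] at this
      exact this
    have hg0 : g ≠ 0 := by
      intro h0
      have := hdvd 0
      rw [h0, zero_dvd_iff] at this
      exact (hpmonic 0).ne_zero this
    have hunit : ¬ IsUnit g := by
      intro hu
      apply htop
      rw [hgen, Ideal.span_singleton_eq_top]
      exact hu
    have hdeg : 0 < (g.map (algebraMap ℝ ℂ)).degree := by
      rw [Polynomial.degree_map]
      rcases lt_or_eq_of_le (Polynomial.zero_le_degree_iff.mpr hg0) with h1 | h2
      · exact h1
      · exfalso
        exact hunit (Polynomial.isUnit_iff_degree_eq_zero.mpr h2.symm)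
    obtain ⟨z, hz⟩ := Complex.exists_root hdeg
    obtain ⟨i, hi⟩ := hp z
    apply hi
    obtain ⟨r, hr⟩ := hdvd i
    have : Polynomial.aeval z (p i) =
        Polynomial.aeval z g * Polynomial.aeval z r := by
      rw [hr, map_mul]
    rw [this]
    have hzg : Polynomial.aeval z g = 0 := by
      rw [Polynomial.aeval_def, Polynomial.eval₂_eq_eval_map]
      exact hz
    rw [hzg, zero_mul]
  -- get a combination ∑ c j • p j = 1
  have hone : (1 : Polynomial ℝ) ∈ I := hItop ▸ Submodule.mem_top
  rw [hI, Ideal.span, Submodule.mem_span_range_iff_exists_fun (Polynomial ℝ)] at hone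
  obtain ⟨c, hc⟩ := hone
  intro i
  -- p i divides q i
  have hdvd : p i ∣ q i := by
    refine ⟨∑ j, c j * q j, ?_⟩
    calc q i = q i * ∑ j, c j • p j := by rw [hc, mul_one]
    _ = ∑ j, c j * (p j * q i) := by
        rw [Finset.mul_sum]; congr 1; ext j; simp [smul_eq_mul]; ring
    _ = ∑ j, c j * (p i * q j) := by
        congr 1; ext j; rw [h' j i]
    _ = p i * ∑ j, c j * q j := by
        rw [Finset.mul_sum]; congr 1; ext j; ring
  obtain ⟨r, hr⟩ := hdvd
  have hr0 : r ≠ 0 := by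
    intro h0
    apply (hqmonic i).ne_zero
    rw [hr, h0, mul_zero]
  have hdeg : r.natDegree = 0 := by
    have := Polynomial.natDegree_mul (hpmonic i).ne_zero hr0
    rw [← hr, hqdeg i, hpdeg i] at this
    omega
  have hlead : r.leadingCoeff = 1 := by
    have := congrArg Polynomial.leadingCoeff hr
    rw [Polynomial.leadingCoeff_mul, (hqmonic i).leadingCoeff,
      (hpmonic i).leadingCoeff, one_mul] at this
    exact this.symm
  have hr1 : r = 1 := by
    rw [Polynomial.eq_C_of_natDegree_eq_zero hdeg]
    rw [Polynomial.leadingCoeff, hdeg] at hlead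
    rw [hlead, map_one]
  rw [hr, hr1, mul_one]
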